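/- Let A be a unital C*-algebra generated by a self-adjoint subspace S containing 1, and let μ, ν : A → Mₖ be unital completely positive maps. If μ(bⁿ) = ν(bⁿ) for every n ∈ ℕ, every m ∈ ℕ, and every self-adjoint b ∈ Mₘ(S) (with μ, ν amplified entrywise), then μ = ν. In particular, for self-adjoint a₁,…,aₙ ∈ S, the value μ(a₁a₂⋯aₙ) is determined by the values of μ on powers of self-adjoint matrices over S, via the trick of placing a₁,…,aₙ on the off-diagonals of a selfadjoint (n+1)×(n+1) matrix b over S, whose n-th power has a₁⋯aₙ as its (1, n+1) entry. -/
import Mathlib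


noncomputable section

def triMat {A : Type*} [Ring A] (n : ℕ) (f : ℕ → A) :
    Matrix (Fin (n+1)) (Fin (n+1)) A :=
  Matrix.of fun i j =>
    if i.val + 1 = j.val then f i.val else if j.val + 1 = i.val then f j.val else 0

lemma triMat_apply {A : Type*} [Ring A] (n : ℕ) (f : ℕ → A) (i j : Fin (n+1)) :
    triMat n f i j =
      if i.val + 1 = j.val then f i.val else if j.val + 1 = i.val then f j.val else 0 :=
  rfl

lemma triMat_pow {A : Type*} [Ring A] (n : ℕ) (f : ℕ → A) (m : ℕ) :
    ∀ j : Fin (n+1), m ≤ j.val →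
      ((triMat n f) ^ m) 0 j =
        if j.val = m then ((List.range m).map f).prod else 0 := by
  induction m with
  | zero =>
    intro j _
    rw [pow_zero, Matrix.one_apply]
    by_cases hj : j.val = 0
    · rw [if_pos (by apply Fin.ext; simp [hj]), if_pos hj]
      simp
    · rw [if_neg (fun hh => hj (by simp [Fin.ext_iff] at hh; omega)), if_neg hj]
  | succ m ih =>
    intro j hj
    rw [pow_succ, Matrix.mul_apply]
    rcases eq_or_lt_of_le hj with hc | hc
    · have hm : m < n + 1 := by omega
      rw [Finset.sum_eq_single (⟨m, hm⟩ : Fin (n+1))]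
      · rw [ih ⟨m, hm⟩ le_rfl, if_pos rfl, if_pos hc.symm, triMat_apply,
          if_pos (by simp [← hc]), List.range_succ]
        simp
      · intro x _ hx
        rw [triMat_apply]
        by_cases h1 : x.val + 1 = j.val
        · exact absurd (by apply Fin.ext; simp only [Fin.val_mk]; omega : x = ⟨m, hm⟩) hx
        · rw [if_neg h1]
          by_cases h2 : j.val + 1 = x.val
          · rw [if_pos h2, ih x (by omega), if_neg (by omega), zero_mul]
          · rw [if_neg h2, mul_zero]
      · intro hx; exact absurd (Finset.mem_univ _) hx
    · rw [if_neg (by omega)]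
      apply Finset.sum_eq_zero
      intro x _
      rw [triMat_apply]
      by_cases h1 : x.val + 1 = j.val
      · rw [if_pos h1, ih x (by omega), if_neg (by omega), zero_mul]
      · rw [if_neg h1]
        by_cases h2 : j.val + 1 = x.val
        · rw [if_pos h2, ih x (by omega), if_neg (by omega), zero_mul]
        · rw [if_neg h2, mul_zero]


/-- A linear map from a C*-algebra into `k × k` complex matrices is completely
positive if each of its amplifications maps positive matrices over `A` to
positive matrices (positivity being witnessed by factorizations `star y * y`). -/
def IsCompletelyPositive {A : Type*} [NormedRing A] [StarRing A] [CStarRing A]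
    [NormedAlgebra ℂ A] [StarModule ℂ A] [CompleteSpace A] {k : ℕ}
    (μ : A →L[ℂ] Matrix (Fin k) (Fin k) ℂ) : Prop :=
  ∀ (m : ℕ) (x : Matrix (Fin m) (Fin m) A), (∃ y : Matrix (Fin m) (Fin m) A, x = star y * y) →
    ∃ c : Matrix (Fin m) (Fin m) (Matrix (Fin k) (Fin k) ℂ),
      x.map μ = star c * c

/-- Let `A` be a unital C*-algebra generated by a unital
self-adjoint subspace `S`, and let `μ, ν : A → Mₖ` be unital completely positive
maps.  If `μ(bⁿ) = ν(bⁿ)` (entrywise amplification) for every `n`, every `m`, and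
every self-adjoint `b ∈ Mₘ(S)`, then `μ = ν`. -/
theorem ucp_maps_agreeing_on_powers_of_selfadjoint_matrices_are_equal
    {A : Type*} [NormedRing A] [StarRing A] [CStarRing A]
    [NormedAlgebra ℂ A] [StarModule ℂ A] [CompleteSpace A]
    (S : Submodule ℂ A) (hone : (1 : A) ∈ S) (hstar : ∀ a ∈ S, star a ∈ S)
    (hgen : (StarAlgebra.adjoin ℂ (S : Set A)).topologicalClosure = ⊤)
    {k : ℕ} (μ ν : A →L[ℂ] Matrix (Fin k) (Fin k) ℂ)
    (hμ1 : μ 1 = 1) (hν1 : ν 1 = 1)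
    (hμcp : IsCompletelyPositive μ) (hνcp : IsCompletelyPositive ν)
    (h : ∀ (m n : ℕ) (b : Matrix (Fin m) (Fin m) A),
      (∀ i j, b i j ∈ S) → star b = b →
      (b ^ n).map μ = (b ^ n).map ν) :
    μ = ν := by
  set T : Set A := {a | a ∈ S ∧ star a = a} with hTdef
  -- Step 1: μ and ν agree on products of selfadjoint elements of S
  have hlist : ∀ l : List A, (∀ a ∈ l, a ∈ T) → μ l.prod = ν l.prod := by
    intro l hl
    set n := l.length with hn
    set f : ℕ → A := fun i => l.getD i 0 with hf
    have hfT : ∀ i, f i ∈ S ∧ star (f i) = f i := by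
      intro i
      by_cases hi : i < n
      · have : f i = l[i] := List.getD_eq_getElem l 0 hi
        rw [this]
        exact hl _ (List.getElem_mem hi)
      · have : f i = 0 := List.getD_eq_default l 0 (by omega)
        rw [this]
        exact ⟨S.zero_mem, star_zero _⟩
    set b := triMat n f with hb
    have hbS : ∀ i j, b i j ∈ S := by
      intro i j
      rw [hb, triMat_apply]
      split_ifs
      · exact (hfT _).1
      · exact (hfT _).1
      · exact S.zero_mem
    have hbstar : star b = b := by
      ext i j
      rw [Matrix.star_apply, hb, triMat_apply, triMat_apply]
      by_cases h1 : i.val + 1 = j.val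
      · rw [if_neg (by omega), if_pos h1, (hfT _).2, if_pos h1]
      · by_cases h2 : j.val + 1 = i.val
        · rw [if_pos h2, (hfT _).2, if_neg h1, if_pos h2]
        · rw [if_neg (by omega), if_neg (by omega), if_neg h1, if_neg h2, star_zero]
    have hmap := h (n+1) n b hbS hbstar
    have hentry : μ ((b^n) 0 ⟨n, n.lt_succ_self⟩) = ν ((b^n) 0 ⟨n, n.lt_succ_self⟩) := by
      have h2 : ((b^n).map μ) 0 ⟨n, n.lt_succ_self⟩ = ((b^n).map ν) 0 ⟨n, n.lt_succ_self⟩ := by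
        rw [hmap]
      simpa [Matrix.map_apply] using h2
    have hpow : (b^n) 0 ⟨n, n.lt_succ_self⟩ = l.prod := by
      rw [hb, triMat_pow n f n ⟨n, n.lt_succ_self⟩ le_rfl, if_pos rfl]
      congr 1
      apply List.ext_getElem
      · simp [hn]
      · intro i h1 h2
        simp [hf, List.getD, List.getElem?_eq_getElem h2]
    rw [hpow] at hentry
    exact hentry
  -- Step 2: agreement on the submonoid closure of T
  have hmono : ∀ x ∈ Submonoid.closure T, μ x = ν x := by
    intro x hx
    obtain ⟨l, hl, rfl⟩ := Submonoid.exists_list_of_mem_closure hx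
    exact hlist l hl
  -- Step 3: agreement on the span
  have hspan : ∀ x ∈ Submodule.span ℂ (Submonoid.closure T : Set A), μ x = ν x := by
    intro x hx
    have hle : Submodule.span ℂ (Submonoid.closure T : Set A) ≤
        LinearMap.eqLocus (μ : A →ₗ[ℂ] Matrix (Fin k) (Fin k) ℂ) (ν : A →ₗ[ℂ] _) := by
      rw [Submodule.span_le]
      intro y hy
      exact hmono y hy
    exact hle hx
  -- Step 4: agreement on the star subalgebra adjoin of S
  have hTstar : T ∪ star T = T := by
    apply Set.union_eq_self_of_subset_right
    intro a ha
    rw [Set.mem_star] at ha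
    obtain ⟨h1, h2⟩ := ha
    have ha' : a = star (star a) := (star_star a).symm
    constructor
    · rw [ha']; exact hstar _ h1
    · conv_rhs => rw [ha']
      rw [h2]
  have hadj : ∀ x ∈ StarAlgebra.adjoin ℂ (S : Set A), μ x = ν x := by
    have hSsub : (S : Set A) ⊆ ↑(StarAlgebra.adjoin ℂ T) := by
      intro a ha
      set x : A := (2:ℂ)⁻¹ • (a + star a) with hx
      set y : A := (2 * Complex.I)⁻¹ • (a - star a) with hy
      have hxT : x ∈ T := by
        refine ⟨S.smul_mem _ (S.add_mem ha (hstar a ha)), ?_⟩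
        rw [hx, star_smul, star_add, star_star]
        simp only [Complex.star_def, map_inv₀, Complex.conj_ofNat]
        module
      have hyT : y ∈ T := by
        refine ⟨S.smul_mem _ (S.sub_mem ha (hstar a ha)), ?_⟩
        rw [hy, star_smul, star_sub, star_star]
        simp only [Complex.star_def, map_inv₀, map_mul, Complex.conj_I, Complex.conj_ofNat]
        have hc : ((2:ℂ) * -Complex.I)⁻¹ = -((2 * Complex.I)⁻¹) := by
          rw [← inv_neg]; ring_nf
        rw [hc]
        module
      have hdecomp : a = x + Complex.I • y := by
        rw [hx, hy, smul_smul]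
        have h2 : Complex.I * (2 * Complex.I)⁻¹ = (2:ℂ)⁻¹ := by
          rw [mul_inv, Complex.inv_I, mul_comm (2:ℂ)⁻¹, ← mul_assoc, mul_neg,
            Complex.I_mul_I, neg_neg, one_mul]
        rw [h2, smul_add, smul_sub]
        module
      rw [hdecomp]
      exact add_mem (StarAlgebra.subset_adjoin ℂ T hxT)
        ((StarAlgebra.adjoin ℂ T).smul_mem (StarAlgebra.subset_adjoin ℂ T hyT) _)
    have hle : StarAlgebra.adjoin ℂ (S : Set A) ≤ StarAlgebra.adjoin ℂ T :=
      StarAlgebra.adjoin_le hSsub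
    intro x hx
    have hx' : x ∈ StarAlgebra.adjoin ℂ T := hle hx
    have hx'' : x ∈ Submodule.span ℂ (Submonoid.closure (T ∪ star T) : Set A) := by
      rw [← StarAlgebra.adjoin_eq_span]
      exact hx'
    rw [hTstar] at hx''
    exact hspan x hx''
  -- Step 5: conclude by density and continuity
  ext1 x
  have hx : x ∈ (StarAlgebra.adjoin ℂ (S : Set A)).topologicalClosure := by
    rw [hgen]; exact StarSubalgebra.mem_top
  have hcl : x ∈ closure ((StarAlgebra.adjoin ℂ (S : Set A)) : Set A) := hx
  exact (IsClosed.closure_subset_iff (isClosed_eq μ.continuous ν.continuous)).mpr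
    (fun y hy => hadj y hy) hcl


end
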